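/- arXiv:0803.3958 — 2 statements merged into one kernel-verified Lean document; each statement's English description precedes it below -/
import Mathlib

section
/- Let n ≥ 3 and let ξ ∈ ℝⁿ be nonzero. Let S denote the unit sphere of the orthogonal complement ξ^⊥ (an (n−1)-dimensional inner product space), equipped with its spherical (volume) measure σ. For any symmetric bilinear form f on ℝⁿ, the integral ∫_S f(ω, ω)² dσ(ω) equals 0 if and only if there exists v ∈ ℝⁿ such that f(a, b) = ½(⟨ξ, a⟩⟨v, b⟩ + ⟨v, a⟩⟨ξ, b⟩) for all a, b ∈ ℝⁿ. -/
open MeasureTheory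
open scoped RealInnerProductSpace

open scoped Pointwise in
open Set Metric in
/-- The spherical measure of a nonempty open subset of the unit sphere is nonzero. -/
lemma toSphere_open_ne_zero {E : Type*} [NormedAddCommGroup E] [NormedSpace ℝ E]
    [MeasurableSpace E] [BorelSpace E] [FiniteDimensional ℝ E]
    (μ : Measure E) [μ.IsAddHaarMeasure]
    {U : Set (sphere (0 : E) 1)} (hU : IsOpen U) (hne : U.Nonempty) :
    μ.toSphere U ≠ 0 := by
  obtain ⟨ω, hω⟩ := hne
  haveI hnt : Nontrivial E := ⟨⟨(ω : E), 0, ne_of_mem_sphere ω.2 one_ne_zero⟩⟩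
  rw [μ.toSphere_apply' hU.measurableSet]
  have key : μ (Subtype.val '' ((homeomorphUnitSphereProd E) ⁻¹'
      (U ×ˢ Iio ⟨1, Set.mem_Ioi.2 one_pos⟩)))
      = μ (Ioo (0 : ℝ) 1 • (Subtype.val '' U)) :=
    μ.toSphere_apply_aux U ⟨1, Set.mem_Ioi.2 one_pos⟩
  have hIio : IsOpen (Iio ((⟨1, Set.mem_Ioi.2 one_pos⟩ : Ioi (0:ℝ)))) := by
    have : Iio ((⟨1, Set.mem_Ioi.2 one_pos⟩ : Ioi (0:ℝ))) = Subtype.val ⁻¹' Iio (1:ℝ) := rfl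
    rw [this]; exact isOpen_Iio.preimage continuous_subtype_val
  have hA : IsOpen (Subtype.val '' ((homeomorphUnitSphereProd E) ⁻¹'
      (U ×ˢ Iio ⟨1, Set.mem_Ioi.2 one_pos⟩))) :=
    (isOpen_compl_singleton).isOpenMap_subtype_val _
      ((homeomorphUnitSphereProd E).continuous.isOpen_preimage _ (hU.prod hIio))
  have hAne : (Subtype.val '' ((homeomorphUnitSphereProd E) ⁻¹'
      (U ×ˢ Iio ⟨1, Set.mem_Ioi.2 one_pos⟩))).Nonempty := by
    refine ⟨_, Set.mem_image_of_mem _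
      (?_ : (homeomorphUnitSphereProd E).symm (ω, ⟨1/2, by norm_num⟩) ∈ _)⟩
    rw [Set.mem_preimage, Homeomorph.apply_symm_apply]
    exact ⟨hω, by rw [Set.mem_Iio]; exact Subtype.mk_lt_mk.2 (by norm_num)⟩
  refine mul_ne_zero ?_ ?_
  · exact_mod_cast Nat.cast_ne_zero.2 Module.finrank_pos.ne'
  · rw [← key]; exact hA.measure_ne_zero μ hAne

set_option maxHeartbeats 1000000 in
/-- For `n ≥ 3` and `0 ≠ ξ ∈ ℝⁿ`, the integral of `f(ω,ω)²` over the
unit sphere of the hyperplane `ξ^⊥` (with its spherical measure) vanishes iff the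
symmetric bilinear form `f` is potential, i.e. `f = ½(ξ ⊗ v + v ⊗ ξ)` for some `v`. -/
theorem integral_sq_eq_zero_iff_potential
    (n : ℕ) (hn : 3 ≤ n) (ξ : EuclideanSpace ℝ (Fin n)) (hξ : ξ ≠ 0)
    (f : EuclideanSpace ℝ (Fin n) →ₗ[ℝ] EuclideanSpace ℝ (Fin n) →ₗ[ℝ] ℝ)
    (hsymm : ∀ a b, f a b = f b a) :
    (∫ ω : Metric.sphere (0 : (ℝ ∙ ξ)ᗮ) 1,
        (f ((ω : (ℝ ∙ ξ)ᗮ) : EuclideanSpace ℝ (Fin n)) ((ω : (ℝ ∙ ξ)ᗮ) : EuclideanSpace ℝ (Fin n))) ^ 2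
        ∂((volume : Measure (ℝ ∙ ξ)ᗮ).toSphere)) = 0 ↔
      ∃ v : EuclideanSpace ℝ (Fin n), ∀ a b : EuclideanSpace ℝ (Fin n),
        f a b = (1 / 2) * (⟪ξ, a⟫ * ⟪v, b⟫ + ⟪v, a⟫ * ⟪ξ, b⟫) := by
  constructor
  · intro h
    -- continuity of the quadratic form
    have hcont : Continuous fun x : EuclideanSpace ℝ (Fin n) => f x x := by
      let B : EuclideanSpace ℝ (Fin n) →ₗ[ℝ] (EuclideanSpace ℝ (Fin n) →L[ℝ] ℝ) :=
        { toFun := fun x => LinearMap.toContinuousLinearMap (f x)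
          map_add' := fun x y => by ext z; simp
          map_smul' := fun c x => by ext z; simp }
      exact (B.continuous_of_finiteDimensional).clm_apply continuous_id
    have hg : Continuous fun ω : Metric.sphere (0 : (ℝ ∙ ξ)ᗮ) 1 =>
        (f ((ω : (ℝ ∙ ξ)ᗮ) : EuclideanSpace ℝ (Fin n))
          ((ω : (ℝ ∙ ξ)ᗮ) : EuclideanSpace ℝ (Fin n))) ^ 2 :=
      (hcont.comp (continuous_subtype_val.comp continuous_subtype_val)).pow 2
    have hint : Integrable (fun ω : Metric.sphere (0 : (ℝ ∙ ξ)ᗮ) 1 =>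
        (f ((ω : (ℝ ∙ ξ)ᗮ) : EuclideanSpace ℝ (Fin n))
          ((ω : (ℝ ∙ ξ)ᗮ) : EuclideanSpace ℝ (Fin n))) ^ 2)
        ((volume : Measure (ℝ ∙ ξ)ᗮ).toSphere) :=
      hg.integrable_of_hasCompactSupport ((isClosed_tsupport _).isCompact)
    rw [integral_eq_zero_iff_of_nonneg (fun ω => sq_nonneg _) hint] at h
    have hnull : ((volume : Measure (ℝ ∙ ξ)ᗮ).toSphere)
        {ω : Metric.sphere (0 : (ℝ ∙ ξ)ᗮ) 1 |
          (f ((ω : (ℝ ∙ ξ)ᗮ) : EuclideanSpace ℝ (Fin n))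
            ((ω : (ℝ ∙ ξ)ᗮ) : EuclideanSpace ℝ (Fin n))) ^ 2 ≠ 0} = 0 := by
      have := ae_iff.mp h
      simpa using this
    -- pointwise vanishing on the sphere
    have hsphere : ∀ ω : Metric.sphere (0 : (ℝ ∙ ξ)ᗮ) 1,
        f ((ω : (ℝ ∙ ξ)ᗮ) : EuclideanSpace ℝ (Fin n))
          ((ω : (ℝ ∙ ξ)ᗮ) : EuclideanSpace ℝ (Fin n)) = 0 := by
      intro ω
      by_contra hne
      have hUopen : IsOpen {ω' : Metric.sphere (0 : (ℝ ∙ ξ)ᗮ) 1 |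
          (f ((ω' : (ℝ ∙ ξ)ᗮ) : EuclideanSpace ℝ (Fin n))
            ((ω' : (ℝ ∙ ξ)ᗮ) : EuclideanSpace ℝ (Fin n))) ^ 2 ≠ 0} :=
        isOpen_compl_singleton.preimage hg
      exact toSphere_open_ne_zero volume hUopen ⟨ω, pow_ne_zero 2 hne⟩ hnull
    -- vanishing of the quadratic form on the hyperplane
    have hH : ∀ x : EuclideanSpace ℝ (Fin n), x ∈ (ℝ ∙ ξ)ᗮ → f x x = 0 := by
      intro x hx
      rcases eq_or_ne x 0 with rfl | hx0
      · simp
      · have hnx : ‖x‖ ≠ 0 := norm_ne_zero_iff.2 hx0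
        have hmem : (‖x‖⁻¹ • x) ∈ (ℝ ∙ ξ)ᗮ := Submodule.smul_mem _ _ hx
        have husp : (⟨‖x‖⁻¹ • x, hmem⟩ : (ℝ ∙ ξ)ᗮ) ∈
            Metric.sphere (0 : (ℝ ∙ ξ)ᗮ) 1 := by
          rw [mem_sphere_zero_iff_norm]
          show ‖(‖x‖⁻¹ • x)‖ = 1
          rw [norm_smul, norm_inv, norm_norm, inv_mul_cancel₀ hnx]
        have hval := hsphere ⟨⟨‖x‖⁻¹ • x, hmem⟩, husp⟩
        have hxx : f x x = ‖x‖ * (‖x‖ * f (‖x‖⁻¹ • x) (‖x‖⁻¹ • x)) := by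
          conv_lhs => rw [← smul_inv_smul₀ hnx x]
          simp only [LinearMap.map_smul, LinearMap.smul_apply, smul_eq_mul]
          ring
        rw [hxx, hval]; ring
    -- vanishing of the bilinear form on the hyperplane, by polarization
    have hbil : ∀ x y : EuclideanSpace ℝ (Fin n),
        x ∈ (ℝ ∙ ξ)ᗮ → y ∈ (ℝ ∙ ξ)ᗮ → f x y = 0 := by
      intro x y hx hy
      have h1 := hH (x + y) (Submodule.add_mem _ hx hy)
      have h2 := hH x hx
      have h3 := hH y hy
      have hxy := hsymm x y
      simp only [map_add, LinearMap.add_apply] at h1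
      linarith
    -- Riesz representation of b ↦ f ξ b
    set w : EuclideanSpace ℝ (Fin n) :=
      (InnerProductSpace.toDual ℝ (EuclideanSpace ℝ (Fin n))).symm
        (LinearMap.toContinuousLinearMap (f ξ)) with hw_def
    have hw : ∀ b : EuclideanSpace ℝ (Fin n), ⟪w, b⟫ = f ξ b := fun b =>
      InnerProductSpace.toDual_symm_apply
    set c : ℝ := ⟪ξ, ξ⟫ with hc_def
    have hc : c ≠ 0 := inner_self_ne_zero.2 hξ
    refine ⟨c⁻¹ • ((2:ℝ) • w - (c⁻¹ * f ξ ξ) • ξ), ?_⟩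
    have hv : ∀ b : EuclideanSpace ℝ (Fin n), ⟪c⁻¹ • ((2:ℝ) • w - (c⁻¹ * f ξ ξ) • ξ), b⟫
        = c⁻¹ * (2 * f ξ b - c⁻¹ * f ξ ξ * ⟪ξ, b⟫) := by
      intro b
      rw [real_inner_smul_left, inner_sub_left, real_inner_smul_left, real_inner_smul_left, hw]
    intro a b
    have ha' : a - (c⁻¹ * ⟪ξ, a⟫) • ξ ∈ (ℝ ∙ ξ)ᗮ := by
      rw [Submodule.mem_orthogonal_singleton_iff_inner_right, inner_sub_right,
        real_inner_smul_right, ← hc_def]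
      field_simp
      ring
    have hb' : b - (c⁻¹ * ⟪ξ, b⟫) • ξ ∈ (ℝ ∙ ξ)ᗮ := by
      rw [Submodule.mem_orthogonal_singleton_iff_inner_right, inner_sub_right,
        real_inner_smul_right, ← hc_def]
      field_simp
      ring
    have hkey := hbil _ _ ha' hb'
    simp only [map_sub, LinearMap.sub_apply, LinearMap.map_smul, LinearMap.smul_apply, smul_eq_mul] at hkey
    have hsab := hsymm a ξ
    rw [hv, hv]
    linear_combination hkey + (c⁻¹ * ⟪ξ, b⟫) * hsab
  · rintro ⟨v, hv⟩
    have hzero : ∀ ω : Metric.sphere (0 : (ℝ ∙ ξ)ᗮ) 1,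
        (f ((ω : (ℝ ∙ ξ)ᗮ) : EuclideanSpace ℝ (Fin n))
          ((ω : (ℝ ∙ ξ)ᗮ) : EuclideanSpace ℝ (Fin n))) ^ 2 = 0 := by
      intro ω
      have hz : ⟪ξ, ((ω : (ℝ ∙ ξ)ᗮ) : EuclideanSpace ℝ (Fin n))⟫ = 0 :=
        Submodule.mem_orthogonal_singleton_iff_inner_right.1 (ω : (ℝ ∙ ξ)ᗮ).2
      rw [hv, hz]; ring
    have hfun : (fun ω : Metric.sphere (0 : (ℝ ∙ ξ)ᗮ) 1 =>
        (f ((ω : (ℝ ∙ ξ)ᗮ) : EuclideanSpace ℝ (Fin n))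
          ((ω : (ℝ ∙ ξ)ᗮ) : EuclideanSpace ℝ (Fin n))) ^ 2) = fun _ => (0:ℝ) :=
      funext hzero
    rw [hfun]
    simp
end

section
/- Let n ≥ 3 and let ξ ∈ ℝⁿ be nonzero. Let S denote the unit sphere of the orthogonal complement ξ^⊥, equipped with its spherical (volume) measure σ. If f is a nonzero symmetric bilinear form on ℝⁿ satisfying f(ξ, b) = 0 for all b ∈ ℝⁿ, then ∫_S f(ω, ω)² dσ(ω) > 0. -/
open MeasureTheory
open scoped RealInnerProductSpace

set_option maxHeartbeats 1000000 in
set_option synthInstance.maxHeartbeats 400000 in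
open Metric Set Pointwise ENNReal in
/-- For `n ≥ 3` and `0 ≠ ξ ∈ ℝⁿ`, if `f` is a nonzero symmetric
bilinear form on `ℝⁿ` that is solenoidal at frequency `ξ` (i.e. `f(ξ, ·) = 0`), then
the integral of `f(ω,ω)²` over the unit sphere of `ξ^⊥` (with its spherical measure)
is strictly positive: the normal operator is elliptic on solenoidal tensors. -/
theorem integral_sq_pos_of_solenoidal
    (n : ℕ) (hn : 3 ≤ n) (ξ : EuclideanSpace ℝ (Fin n)) (hξ : ξ ≠ 0)
    (f : EuclideanSpace ℝ (Fin n) →ₗ[ℝ] EuclideanSpace ℝ (Fin n) →ₗ[ℝ] ℝ)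
    (hsymm : ∀ a b, f a b = f b a)
    (hf : f ≠ 0)
    (hsol : ∀ b : EuclideanSpace ℝ (Fin n), f ξ b = 0) :
    0 < ∫ ω : Metric.sphere (0 : (ℝ ∙ ξ)ᗮ) 1,
        (f ((ω : (ℝ ∙ ξ)ᗮ) : EuclideanSpace ℝ (Fin n)) ((ω : (ℝ ∙ ξ)ᗮ) : EuclideanSpace ℝ (Fin n))) ^ 2
        ∂((volume : Measure (ℝ ∙ ξ)ᗮ).toSphere) := by
  classical
  have hE : True := trivial
  set K : Submodule ℝ (EuclideanSpace ℝ (Fin n)) := (ℝ ∙ ξ)ᗮ with hKdef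
  -- Step 1: a vector in K on which the quadratic form is nonzero.
  obtain ⟨w, hwK, hw⟩ : ∃ w : EuclideanSpace ℝ (Fin n), w ∈ K ∧ f w w ≠ 0 := by
    have hker : ∀ a b : EuclideanSpace ℝ (Fin n), a ∈ (ℝ ∙ ξ) → f a b = 0 := by
      intro a b ha
      obtain ⟨c, rfl⟩ := Submodule.mem_span_singleton.1 ha
      simp [LinearMap.map_smul, hsol b]
    obtain ⟨a, b, hab⟩ : ∃ a b, f a b ≠ 0 := by
      by_contra h
      push_neg at h
      exact hf (by ext a b; simp [h])
    obtain ⟨za, hza, ya, hya, rfl⟩ := (ℝ ∙ ξ).exists_add_mem_mem_orthogonal a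
    obtain ⟨zb, hzb, yb, hyb, rfl⟩ := (ℝ ∙ ξ).exists_add_mem_mem_orthogonal b
    have hab' : f ya yb ≠ 0 := by
      simpa [map_add, hker _ _ hza, hker _ _ hzb, hsymm ya zb, hker _ _ hzb] using hab
    by_cases h1 : f ya ya ≠ 0
    · exact ⟨ya, hya, h1⟩
    by_cases h2 : f yb yb ≠ 0
    · exact ⟨yb, hyb, h2⟩
    push_neg at h1 h2
    have key : f (ya + yb) (ya + yb) = 2 * f ya yb := by
      simp only [map_add, LinearMap.add_apply, h1, h2, hsymm yb ya]
      ring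
    exact ⟨ya + yb, Submodule.add_mem _ hya hyb, by rw [key]; simpa using hab'⟩
  have hw0 : w ≠ 0 := by rintro rfl; simp at hw
  -- continuity of the quadratic form
  have hcont : Continuous (fun y : EuclideanSpace ℝ (Fin n) => f y y) := by
    let f1 : EuclideanSpace ℝ (Fin n) →ₗ[ℝ] (EuclideanSpace ℝ (Fin n) →L[ℝ] ℝ) := (LinearMap.toContinuousLinearMap.toLinearMap).comp f
    let f2 : EuclideanSpace ℝ (Fin n) →L[ℝ] (EuclideanSpace ℝ (Fin n) →L[ℝ] ℝ) := LinearMap.toContinuousLinearMap f1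
    have : (fun y : EuclideanSpace ℝ (Fin n) => f y y) = fun y => f2 y y := rfl
    rw [this]
    exact f2.continuous₂.comp (continuous_id.prodMk continuous_id)
  haveI : CompactSpace (sphere (0 : K) 1) := isCompact_iff_compactSpace.mp (isCompact_sphere _ _)
  set g : sphere (0 : K) 1 → ℝ := fun ω => (f ((ω : K) : EuclideanSpace ℝ (Fin n)) ((ω : K) : EuclideanSpace ℝ (Fin n))) ^ 2 with hgdef
  have hgcont : Continuous g :=
    (hcont.comp (continuous_subtype_val.comp continuous_subtype_val)).pow 2
  have hint : Integrable g ((volume : Measure K).toSphere) :=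
    hgcont.integrable_of_hasCompactSupport
      (IsCompact.of_isClosed_subset isCompact_univ (isClosed_tsupport g) (Set.subset_univ _))
  have hgnn : 0 ≤ g := fun ω => sq_nonneg _
  rw [show (∫ ω : Metric.sphere (0 : (ℝ ∙ ξ)ᗮ) 1,
        (f ((ω : (ℝ ∙ ξ)ᗮ) : EuclideanSpace ℝ (Fin n)) ((ω : (ℝ ∙ ξ)ᗮ) : EuclideanSpace ℝ (Fin n))) ^ 2
        ∂((volume : Measure (ℝ ∙ ξ)ᗮ).toSphere)) = ∫ ω, g ω ∂((volume : Measure K).toSphere) from rfl,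
    integral_pos_iff_support_of_nonneg hgnn hint]
  -- the support is open
  have hsupp_eq : Function.support g = g ⁻¹' ({0}ᶜ) := by
    ext ω; simp [Function.mem_support]
  have hsupp_open : IsOpen (Function.support g) := by
    rw [hsupp_eq]; exact isOpen_compl_singleton.preimage hgcont
  rw [Measure.toSphere_apply' _ hsupp_open.measurableSet]
  -- an open nonempty subset of the cone over the support
  set U : Set K := {x : K | x ≠ 0 ∧ ‖x‖ < 1 ∧ f (x : EuclideanSpace ℝ (Fin n)) (x : EuclideanSpace ℝ (Fin n)) ≠ 0} with hUdef
  have hUopen : IsOpen U := by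
    have h1 : IsOpen {x : K | x ≠ 0} := isOpen_compl_singleton
    have h2 : IsOpen {x : K | ‖x‖ < 1} := isOpen_lt continuous_norm continuous_const
    have h3 : IsOpen {x : K | f (x : EuclideanSpace ℝ (Fin n)) (x : EuclideanSpace ℝ (Fin n)) ≠ 0} :=
      isOpen_compl_singleton.preimage (hcont.comp continuous_subtype_val)
    exact h1.inter (h2.inter h3)
  have hUne : U.Nonempty := by
    have hwpos : 0 < ‖w‖ := norm_pos_iff.2 hw0
    refine ⟨(2 * ‖w‖)⁻¹ • (⟨w, hwK⟩ : K), ?_, ?_, ?_⟩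
    · exact smul_ne_zero (by positivity) (fun h => hw0 (by simpa using congrArg Subtype.val h))
    · have hwnorm : ‖(⟨w, hwK⟩ : K)‖ = ‖w‖ := rfl
      have hwpos : 0 < ‖w‖ := norm_pos_iff.2 hw0
      rw [norm_smul, hwnorm, norm_inv, Real.norm_of_nonneg (by positivity)]
      rw [inv_mul_eq_div, div_lt_one (by positivity)]
      linarith
    · have : ((((2 * ‖w‖)⁻¹ • (⟨w, hwK⟩ : K)) : K) : EuclideanSpace ℝ (Fin n)) = (2 * ‖w‖)⁻¹ • w := rfl
      rw [this]
      simp only [LinearMap.map_smul, LinearMap.smul_apply, smul_eq_mul]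
      intro h
      apply hw
      field_simp at h
      simpa using h
  have hUsub : U ⊆ Ioo (0 : ℝ) 1 • (Subtype.val '' Function.support g) := by
    rintro x ⟨hx0, hx1, hxf⟩
    have hr : (0 : ℝ) < ‖x‖ := norm_pos_iff.2 hx0
    have hωnorm : ‖(‖x‖⁻¹ • x : K)‖ = 1 := by
      rw [norm_smul, norm_inv, Real.norm_of_nonneg hr.le, inv_mul_cancel₀ hr.ne']
    set ω : sphere (0 : K) 1 := ⟨‖x‖⁻¹ • x, mem_sphere_zero_iff_norm.2 hωnorm⟩ with hω
    have hmem : ω ∈ Function.support g := by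
      simp only [Function.mem_support, hgdef]
      have hcoe : (((ω : K)) : EuclideanSpace ℝ (Fin n)) = ‖x‖⁻¹ • (x : EuclideanSpace ℝ (Fin n)) := rfl
      intro h
      apply hxf
      rw [hcoe] at h
      simp only [LinearMap.map_smul, LinearMap.smul_apply, smul_eq_mul] at h
      have h2 := pow_eq_zero_iff (n := 2) (by norm_num) |>.1 h
      field_simp at h2
      linarith
    have hx : x = ‖x‖ • ((ω : K)) := by
      rw [hω]
      exact (smul_inv_smul₀ hr.ne' x).symm
    rw [hx]
    exact Set.smul_mem_smul ⟨hr, hx1⟩ (Set.mem_image_of_mem _ hmem)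
  have hUpos : (0 : ℝ≥0∞) < volume U := hUopen.measure_pos volume hUne
  have hvol : (0 : ℝ≥0∞) < volume (Ioo (0 : ℝ) 1 • (Subtype.val '' Function.support g)) :=
    lt_of_lt_of_le hUpos (measure_mono hUsub)
  haveI : Nontrivial K := nontrivial_of_ne (⟨w, hwK⟩ : K) 0
    (fun h => hw0 (by simpa using congrArg Subtype.val h))
  have hdim : (Module.finrank ℝ K : ℝ≥0∞) ≠ 0 := by
    exact_mod_cast Module.finrank_pos.ne'
  exact ENNReal.mul_pos hdim hvol.ne'
end
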